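/- Define on ℝ² the functions φ_{2o}(y) = (4/3)·((|y|² − 1)/(|y|² + 1))·log(1 + |y|²) − (8/3)·1/(|y|² + 1), U(y) = 8/(1 + |y|²)², and Z₀(y) = 2(1 − |y|²)/(1 + |y|²). Then Δφ_{2o}(y) + U(y)·φ_{2o}(y) + U(y)·Z₀(y) = 0 for all y ∈ ℝ². -/

import Mathlib

open Real

noncomputable section

/-- Points of `ℝ²` as pairs. -/
abbrev R2 : Type := ℝ × ℝ

/-- Partial derivatives on `ℝ²`. -/
def pdx (f : R2 → ℝ) (p : R2) : ℝ := deriv (fun s => f (s, p.2)) p.1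
def pdy (f : R2 → ℝ) (p : R2) : ℝ := deriv (fun s => f (p.1, s)) p.2

/-- Laplacian on `ℝ²`. -/
def lap2 (f : R2 → ℝ) (p : R2) : ℝ := pdx (pdx f) p + pdy (pdy f) p

/-- The explicit radial solution of the linearized Liouville equation with right-hand
side `−e^Γ Z₀`. -/
def phi2o (y : R2) : ℝ :=
  4 / 3 * ((y.1 ^ 2 + y.2 ^ 2 - 1) / (y.1 ^ 2 + y.2 ^ 2 + 1))
      * Real.log (1 + y.1 ^ 2 + y.2 ^ 2)
    - 8 / 3 * (1 / (y.1 ^ 2 + y.2 ^ 2 + 1))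

/-- The Liouville bubble `U(y) = 8/(1+|y|²)²`. -/
def Ubub (y : R2) : ℝ := 8 / (1 + y.1 ^ 2 + y.2 ^ 2) ^ 2

/-- The radial kernel element `Z₀(y) = 2(1−|y|²)/(1+|y|²)`. -/
def Z0 (y : R2) : ℝ := 2 * (1 - (y.1 ^ 2 + y.2 ^ 2)) / (1 + y.1 ^ 2 + y.2 ^ 2)

/-- radial profile -/
def Fφ (u : ℝ) : ℝ := 4/3 * ((u-1)/(u+1)) * Real.log (1+u) - 8/3 * (1/(u+1))
/-- its derivative -/
def Gφ (u : ℝ) : ℝ := 8/3 * Real.log (1+u) / (u+1)^2 + 4/3 / (u+1)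
/-- second derivative -/
def Hφ (u : ℝ) : ℝ := (8/3 - 16/3 * Real.log (1+u)) / (u+1)^3 - 4/3 / (u+1)^2

lemma phi2o_eq (y : R2) : phi2o y = Fφ (y.1^2 + y.2^2) := by
  have h : 1 + y.1^2 + y.2^2 = 1 + (y.1^2 + y.2^2) := by ring
  simp only [phi2o, Fφ, h]

lemma hasDerivAt_log1u (u : ℝ) (hu : 0 ≤ u) :
    HasDerivAt (fun u : ℝ => Real.log (1+u)) (1/(1+u)) u := by
  have h1 : (1:ℝ) + u ≠ 0 := by linarith
  have := (Real.hasDerivAt_log h1).comp u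
    ((hasDerivAt_id u).const_add (1:ℝ))
  simpa [one_div, Function.comp_def] using this

lemma hasDerivAt_F (u : ℝ) (hu : 0 ≤ u) : HasDerivAt Fφ (Gφ u) u := by
  have h2 : u + 1 ≠ 0 := by linarith
  have hlog := hasDerivAt_log1u u hu
  have hq : HasDerivAt (fun u : ℝ => (u-1)/(u+1))
      ((1*(u+1) - (u-1)*1)/(u+1)^2) u :=
    HasDerivAt.div ((hasDerivAt_id u).sub_const 1) ((hasDerivAt_id u).add_const 1) h2
  have hinv : HasDerivAt (fun u : ℝ => 1/(u+1)) ((0*(u+1) - 1*1)/(u+1)^2) u :=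
    HasDerivAt.div (hasDerivAt_const u 1) ((hasDerivAt_id u).add_const 1) h2
  have h := (((hq.mul hlog).const_mul (4/3)).sub (hinv.const_mul (8/3)))
  have hfun : Fφ = fun u : ℝ =>
      4/3 * ((u-1)/(u+1) * Real.log (1+u)) - 8/3 * (1/(u+1)) := by
    funext v; simp only [Fφ]; ring
  rw [hfun]
  refine h.congr_deriv ?_
  simp only [Gφ]
  field_simp
  ring

lemma hasDerivAt_G (u : ℝ) (hu : 0 ≤ u) : HasDerivAt Gφ (Hφ u) u := by
  have h1 : (1:ℝ) + u ≠ 0 := by linarith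
  have h2 : u + 1 ≠ 0 := by linarith
  have h2' : (u+1)^2 ≠ 0 := pow_ne_zero _ h2
  have hlog := hasDerivAt_log1u u hu
  have hden : HasDerivAt (fun u : ℝ => (u+1)^2) (2*(u+1)^1*1) u :=
    by simpa using ((hasDerivAt_id u).add_const 1).fun_pow 2
  have hA : HasDerivAt (fun u : ℝ => 8/3 * Real.log (1+u) / (u+1)^2)
      (((8/3 * (1/(1+u))) * (u+1)^2 - (8/3 * Real.log (1+u)) * (2*(u+1)^1*1)) / ((u+1)^2)^2) u :=
    HasDerivAt.div (hlog.const_mul (8/3)) hden h2'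
  have hB : HasDerivAt (fun u : ℝ => 4/3 / (u+1))
      ((0*(u+1) - 4/3*1)/(u+1)^2) u :=
    HasDerivAt.div (hasDerivAt_const u (4/3)) ((hasDerivAt_id u).add_const 1) h2
  have h := hA.add hB
  have hfun : Gφ = fun u : ℝ => 8/3 * Real.log (1+u) / (u+1)^2 + 4/3 / (u+1) := rfl
  rw [hfun]
  refine h.congr_deriv ?_
  simp only [Hφ]
  field_simp
  ring

lemma pdx_phi (p : R2) : pdx phi2o p = 2 * p.1 * Gφ (p.1^2 + p.2^2) := by
  have hfun : (fun s => phi2o (s, p.2)) = fun s => Fφ (s^2 + p.2^2) := by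
    funext s; exact phi2o_eq (s, p.2)
  have hu : (0:ℝ) ≤ p.1^2 + p.2^2 := by positivity
  have hin : HasDerivAt (fun s : ℝ => s^2 + p.2^2) (2*p.1^1*1) p.1 :=
    (by simpa using (hasDerivAt_id p.1).fun_pow 2 : HasDerivAt (fun s : ℝ => s^2) (2*p.1^1*1) p.1).add_const _
  have h := (hasDerivAt_F _ hu).comp p.1 hin
  simp only [Function.comp_def] at h
  simp only [pdx] at hfun ⊢; rw [hfun, h.deriv]; ring

lemma pdy_phi (p : R2) : pdy phi2o p = 2 * p.2 * Gφ (p.1^2 + p.2^2) := by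
  have hfun : (fun s => phi2o (p.1, s)) = fun s => Fφ (p.1^2 + s^2) := by
    funext s; exact phi2o_eq (p.1, s)
  have hu : (0:ℝ) ≤ p.1^2 + p.2^2 := by positivity
  have hin : HasDerivAt (fun s : ℝ => p.1^2 + s^2) (2*p.2^1*1) p.2 :=
    (by simpa using (hasDerivAt_id p.2).fun_pow 2 : HasDerivAt (fun s : ℝ => s^2) (2*p.2^1*1) p.2).const_add _
  have h := (hasDerivAt_F _ hu).comp p.2 hin
  simp only [Function.comp_def] at h
  simp only [pdy] at hfun ⊢; rw [hfun, h.deriv]; ring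

lemma pdxx_phi (p : R2) :
    pdx (pdx phi2o) p = 2 * Gφ (p.1^2+p.2^2) + 4*p.1^2 * Hφ (p.1^2+p.2^2) := by
  have hfun : (fun s => pdx phi2o (s, p.2)) = fun s => 2 * s * Gφ (s^2 + p.2^2) := by
    funext s; exact pdx_phi (s, p.2)
  have hu : (0:ℝ) ≤ p.1^2 + p.2^2 := by positivity
  have hin : HasDerivAt (fun s : ℝ => s^2 + p.2^2) (2*p.1^1*1) p.1 :=
    (by simpa using (hasDerivAt_id p.1).fun_pow 2 : HasDerivAt (fun s : ℝ => s^2) (2*p.1^1*1) p.1).add_const _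
  have h1 : HasDerivAt (fun s : ℝ => 2 * s) 2 p.1 := by
    simpa using (hasDerivAt_id p.1).const_mul (2:ℝ)
  have h2 := (hasDerivAt_G _ hu).comp p.1 hin
  simp only [Function.comp_def] at h2
  have h := h1.fun_mul h2
  simp only [pdx] at hfun ⊢; rw [hfun, h.deriv]; ring

lemma pdyy_phi (p : R2) :
    pdy (pdy phi2o) p = 2 * Gφ (p.1^2+p.2^2) + 4*p.2^2 * Hφ (p.1^2+p.2^2) := by
  have hfun : (fun s => pdy phi2o (p.1, s)) = fun s => 2 * s * Gφ (p.1^2 + s^2) := by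
    funext s; exact pdy_phi (p.1, s)
  have hu : (0:ℝ) ≤ p.1^2 + p.2^2 := by positivity
  have hin : HasDerivAt (fun s : ℝ => p.1^2 + s^2) (2*p.2^1*1) p.2 :=
    (by simpa using (hasDerivAt_id p.2).fun_pow 2 : HasDerivAt (fun s : ℝ => s^2) (2*p.2^1*1) p.2).const_add _
  have h1 : HasDerivAt (fun s : ℝ => 2 * s) 2 p.2 := by
    simpa using (hasDerivAt_id p.2).const_mul (2:ℝ)
  have h2 := (hasDerivAt_G _ hu).comp p.2 hin
  simp only [Function.comp_def] at h2
  have h := h1.fun_mul h2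
  simp only [pdy] at hfun ⊢; rw [hfun, h.deriv]; ring

/-- **The explicit correction `φ_{2o}`** solves `Δφ_{2o} + U φ_{2o} + U Z₀ = 0` on `ℝ²`. -/
theorem phi2o_solves_linearized_liouville :
    ∀ y : R2, lap2 phi2o y + Ubub y * phi2o y + Ubub y * Z0 y = 0 := by
  intro y
  have hpos : (0:ℝ) < 1 + y.1^2 + y.2^2 := by positivity
  have hne : (1:ℝ) + y.1^2 + y.2^2 ≠ 0 := ne_of_gt hpos
  have hne' : y.1^2 + y.2^2 + 1 ≠ 0 := by intro h; apply hne; linarith [h]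
  have harg : 1 + (y.1^2 + y.2^2) = 1 + y.1^2 + y.2^2 := by ring
  rw [lap2, pdxx_phi, pdyy_phi, phi2o_eq, Ubub, Z0, Fφ, Gφ, Hφ, harg]
  field_simp
  ring


end
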